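/- Let A = {a_0, a_1, …, a_{k-1}} be a finite subset of a real normed vector space V with |A| = k ≥ 2, such that the additive subgroup G(A) generated by A is a discrete subgroup of V. Let A' = (k-1)∗A be the dilation of A by k-1. Then there exists a positive integer c = c(A) such that for all integers r ≥ 2 and h ≥ ck^2 there is a set X'_{r,h} ⊆ G(A) with |X'_{r,h}| ≤ k·b(r,k) and rhA' ⊆ X'_{r,h} + hA'. In particular, (k-1)∗A is an asymptotic (r, k·b(r,k))-approximate group for every r ≥ 2. -/

import Mathlib

open Pointwise

/-- The `h`-fold sumset `hA = {a₁ + ⋯ + a_h : aᵢ ∈ A}`. -/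
def hsum {V : Type*} [AddCommMonoid V] (h : ℕ) (A : Set V) : Set V :=
  {z | ∃ f : Fin h → V, (∀ i, f i ∈ A) ∧ z = ∑ i, f i}

/-- The binomial coefficient `b(r,k) = C((r+1)(k-1)-1, k-1)`. -/
def b (r k : ℕ) : ℕ := Nat.choose ((r + 1) * (k - 1) - 1) (k - 1)

lemma card_adt_le (k n : ℕ) (hk : 0 < k) :
    (Finset.Nat.antidiagonalTuple k n).card ≤ Nat.multichoose k n := by
  classical
  have key : ∀ w ∈ Finset.Nat.antidiagonalTuple k n,
      (∑ i, w i • ({i} : Multiset (Fin k))).card = n := by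
    intro w hw
    rw [Finset.Nat.mem_antidiagonalTuple] at hw
    have hms := map_sum (⟨⟨Multiset.card, Multiset.card_zero⟩, Multiset.card_add⟩ :
      Multiset (Fin k) →+ ℕ) (fun i => w i • ({i} : Multiset (Fin k))) Finset.univ
    simp only [AddMonoidHom.coe_mk, ZeroHom.coe_mk] at hms
    rw [hms]
    simpa using hw
  have hcount : ∀ (w : Fin k → ℕ) (i : Fin k),
      Multiset.count i (∑ i', w i' • ({i'} : Multiset (Fin k))) = w i := by
    intro w i
    rw [Multiset.count_sum']
    simp [Multiset.count_nsmul, Multiset.count_singleton, mul_ite]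
  have h1 : Nat.multichoose k n = Fintype.card (Sym (Fin k) n) := by
    rw [Sym.card_sym_eq_multichoose, Fintype.card_fin]
  rw [h1, ← Finset.card_univ]
  refine Finset.card_le_card_of_injOn
    (fun w => if hw : (∑ i, w i • ({i} : Multiset (Fin k))).card = n
      then (⟨∑ i, w i • ({i} : Multiset (Fin k)), hw⟩ : Sym (Fin k) n)
      else ⟨Multiset.replicate n ⟨0, hk⟩, by simp⟩)
    (fun _ _ => Finset.mem_univ _) ?_
  intro w1 h1 w2 h2 heq
  simp only [dif_pos (key _ h1), dif_pos (key _ h2)] at heq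
  have hM : (∑ i, w1 i • ({i} : Multiset (Fin k))) = ∑ i, w2 i • ({i} : Multiset (Fin k)) :=
    by have := congrArg Subtype.val heq; simpa [key _ h1, key _ h2] using this
  funext i
  rw [← hcount w1 i, ← hcount w2 i, hM]

lemma sum_mem_hsum {V : Type*} [AddCommMonoid V] {k : ℕ} (v : Fin k → V) (m : ℕ)
    (y : Fin k → ℕ) (hy : ∑ i, y i = m) :
    (∑ i, y i • v i) ∈ hsum m (Set.range v) := by
  classical
  have hcard : Fintype.card ((i : Fin k) × Fin (y i)) = m := by simp [hy]
  let e := Fintype.equivFinOfCardEq hcard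
  refine ⟨fun j => v (e.symm j).1, fun j => ⟨_, rfl⟩, ?_⟩
  rw [Equiv.sum_comp e.symm (fun σ => v σ.1)]
  rw [← Finset.univ_sigma_univ, Finset.sum_sigma]
  simp [Finset.sum_const]

lemma mem_hsum_decomp {V : Type*} [AddCommMonoid V] {k : ℕ} (v : Fin k → V) (m : ℕ)
    {z : V} (hz : z ∈ hsum m (Set.range v)) :
    ∃ y : Fin k → ℕ, ∑ i, y i = m ∧ z = ∑ i, y i • v i := by
  classical
  obtain ⟨f, hf, rfl⟩ := hz
  choose g hg using hf
  refine ⟨fun i => (Finset.univ.filter fun j => g j = i).card, ?_, ?_⟩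
  · rw [← Finset.card_eq_sum_card_fiberwise (fun x _ => Finset.mem_univ (g x))]
    simp
  · rw [← Finset.sum_fiberwise Finset.univ g f]
    refine Finset.sum_congr rfl fun i _ => ?_
    rw [Finset.sum_congr rfl (fun j hj => ?_), Finset.sum_const]
    exact ((hg j).symm.trans (by rw [(Finset.mem_filter.1 hj).2]) : f j = v i)

lemma arith_count (K R h d Y F : ℕ) (hh : 2*(K+2)^2 ≤ h)
    (hd1 : (K+1)*d ≤ h) (hd2 : h < (K+1)*d + (K+1))
    (hY : (R+2)*h ≤ (K+2)*Y) (hF : Y + d*F ≤ (R+2)*h) : F + 1 ≤ (R+2)*(K+1) := by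
  by_contra hcon
  push_neg at hcon
  have hF2 : (R+2)*(K+1) ≤ F := Nat.lt_succ_iff.mp hcon
  have hA : (K+2)*(d*F) ≤ (K+1)*((R+2)*h) := by
    nlinarith [Nat.mul_le_mul (le_refl (K+2)) hF]
  have hB : ((K+2)*d) * ((R+2)*(K+1)) ≤ h * ((R+2)*(K+1)) := by
    nlinarith [Nat.mul_le_mul (le_refl ((K+2)*d)) hF2]
  have hC : (K+2)*d ≤ h := Nat.le_of_mul_le_mul_right hB (by positivity)
  have h5 : (K+1)*d + d ≤ h := by nlinarith [hC]
  have hd3 : d ≤ K := by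
    generalize hg : (K+1)*d = T at h5 hd2
    omega
  have hfin : h ≤ (K+1)*K + K := by
    nlinarith [Nat.mul_le_mul (le_refl (K+1)) hd3]
  nlinarith

theorem dilate_asymptotic_approximate_group {V : Type*} [NormedAddCommGroup V]
    [NormedSpace ℝ V] (A : Set V) (hA : A.Finite) (k : ℕ) (hk : A.ncard = k)
    (hk2 : 2 ≤ k)
    (hdisc : ∀ B : Set V, Bornology.IsBounded B →
      (B ∩ (AddSubgroup.closure A : Set V)).Finite) :
    ∃ c : ℕ, 0 < c ∧ ∀ r h : ℕ, 2 ≤ r → c * k ^ 2 ≤ h →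
      ∃ X : Finset V, (↑X : Set V) ⊆ (AddSubgroup.closure A : Set V) ∧
        X.card ≤ k * b r k ∧
        hsum (r * h) ((fun x => ((k : ℝ) - 1) • x) '' A) ⊆
          ↑X + hsum h ((fun x => ((k : ℝ) - 1) • x) '' A) := by
  classical
  refine ⟨2, two_pos, ?_⟩
  intro r h hr hh
  have hk0 : 0 < k := by omega
  have hkm1 : 0 < k - 1 := by omega
  -- enumerate A
  have hA' : hA.toFinset.card = k := by
    rwa [Set.ncard_eq_toFinset_card _ hA] at hk
  let e := hA.toFinset.equivFinOfCardEq hA'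
  set a : Fin k → V := fun i => ((e.symm i : hA.toFinset) : V) with ha
  have hamem : ∀ i, a i ∈ A := fun i => (Set.Finite.mem_toFinset hA).1 (e.symm i).2
  have hrange : Set.range a = A := by
    apply Set.Subset.antisymm
    · rintro x ⟨i, rfl⟩; exact hamem i
    · intro x hx
      refine ⟨e ⟨x, (Set.Finite.mem_toFinset hA).2 hx⟩, ?_⟩
      simp [ha]
  set v : Fin k → V := fun i => ((k : ℝ) - 1) • a i with hv
  have himg : (fun x => ((k : ℝ) - 1) • x) '' A = Set.range v := by
    rw [← hrange, ← Set.range_comp]; rfl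
  rw [himg]
  -- v i lies in the closure
  have hcast : ((k - 1 : ℕ) : ℝ) = (k : ℝ) - 1 := by
    push_cast [Nat.cast_sub (by omega : 1 ≤ k)]
    ring
  have hvmem : ∀ i, v i ∈ AddSubgroup.closure A := by
    intro i
    have h1 : v i = (k - 1 : ℕ) • a i := by
      rw [show v i = ((k : ℝ) - 1) • a i from rfl, ← hcast, Nat.cast_smul_eq_nsmul]
    rw [h1]
    exact nsmul_mem (AddSubgroup.subset_closure (hamem i)) _
  -- division setup
  set d : ℕ := h / (k - 1) with hd
  have hd1 : (k - 1) * d ≤ h := by rw [hd]; exact Nat.mul_div_le h (k - 1)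
  have hd2 : h < (k - 1) * d + (k - 1) := by
    have h1 : (k - 1) * d + h % (k - 1) = h := by rw [hd]; exact Nat.div_add_mod h (k - 1)
    have h2 : h % (k - 1) < k - 1 := Nat.mod_lt h hkm1
    omega
  have hd0 : 0 < d := by
    rw [hd]
    exact Nat.div_pos (le_trans (by omega : k - 1 ≤ k)
      (le_trans (by nlinarith : k ≤ 2 * k ^ 2) hh)) hkm1
  clear_value d
  set m' : ℕ := r * h - h with hm'
  have hm'2 : m' + h = r * h := by
    rw [hm']
    exact Nat.sub_add_cancel (Nat.le_mul_of_pos_left h (by omega))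
  clear_value m'
  -- the candidate translates
  set U : Fin k × (Fin k → ℕ) → Fin k → ℤ := fun p i =>
    if i = p.1 then (m' : ℤ) - d * ∑ i' ∈ Finset.univ.erase p.1, p.2 i'
    else (d * p.2 i : ℤ) with hU
  set Φ : Fin k × (Fin k → ℕ) → V := fun p => ∑ i, U p i • v i with hΦ
  set P : Finset (Fin k × (Fin k → ℕ)) :=
    Finset.univ ×ˢ Finset.Nat.antidiagonalTuple k (r * (k - 1) - 1) with hP
  refine ⟨P.image Φ, ?_, ?_, ?_⟩
  · -- subset of closure
    intro x hx
    simp only [Finset.coe_image, Set.mem_image, Finset.mem_coe] at hx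
    obtain ⟨p, _, rfl⟩ := hx
    exact AddSubgroup.sum_mem _ fun i _ => zsmul_mem (hvmem i) _
  · -- cardinality
    refine (Finset.card_image_le).trans ?_
    rw [hP, Finset.card_product, Finset.card_univ, Fintype.card_fin]
    refine Nat.mul_le_mul_left k ?_
    refine (card_adt_le _ _ hk0).trans ?_
    have t1 : 1 ≤ r * (k - 1) := by simpa using Nat.mul_le_mul (show (1:ℕ) ≤ r by omega) hkm1
    have t2 : 1 ≤ (r + 1) * (k - 1) := by
      simpa using Nat.mul_le_mul (show (1:ℕ) ≤ r + 1 by omega) hkm1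
    have t3 : 1 ≤ k + (r * (k - 1) - 1) := le_trans (by omega : 1 ≤ k) (Nat.le_add_right k _)
    have h1 : k + (r * (k - 1) - 1) - 1 = (r + 1) * (k - 1) - 1 := by
      zify [t1, t2, t3, (by omega : 1 ≤ k)]
      ring
    have h2 : r * (k - 1) - 1 ≤ (r + 1) * (k - 1) - 1 :=
      Nat.sub_le_sub_right (Nat.mul_le_mul_right _ (by omega)) 1
    have h3 : ((r + 1) * (k - 1) - 1) - (r * (k - 1) - 1) = k - 1 := by
      zify [t1, t2, h2, (by omega : 1 ≤ k)]
      ring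
    have heq : Nat.multichoose k (r * (k - 1) - 1) = b r k := by
      rw [Nat.multichoose_eq, b, h1, ← Nat.choose_symm h2, h3]
    exact le_of_eq heq
  · -- the covering property
    intro z hz
    obtain ⟨y, hysum, rfl⟩ := mem_hsum_decomp v (r * h) hz
    obtain ⟨j, -, hj⟩ := Finset.exists_max_image Finset.univ y ⟨⟨0, hk0⟩, Finset.mem_univ _⟩
    have hj' : ∀ i, y i ≤ y j := fun i => hj i (Finset.mem_univ i)
    set f : Fin k → ℕ := fun i => y i / d with hf
    set F : ℕ := ∑ i ∈ Finset.univ.erase j, f i with hF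
    set S : ℕ := ∑ i ∈ Finset.univ.erase j, y i with hS
    have hYsum : y j + S = r * h := by
      rw [hS, Finset.add_sum_erase _ _ (Finset.mem_univ j)]; exact hysum
    have hdf : ∀ i, d * f i ≤ y i := fun i => Nat.mul_div_le (y i) d
    have hdF : d * F ≤ S := by
      rw [hF, Finset.mul_sum]
      exact Finset.sum_le_sum fun i _ => hdf i
    clear_value f F S
    have hcard_erase : (Finset.univ.erase j).card = k - 1 := by
      rw [Finset.card_erase_of_mem (Finset.mem_univ j), Finset.card_univ, Fintype.card_fin]
    have hFlow : S + (k - 1) ≤ d * F + (k - 1) * d := by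
      have hlow : ∀ i, y i + 1 ≤ d * f i + d := by
        intro i
        have h1 : d * f i + y i % d = y i := by rw [hf]; exact Nat.div_add_mod (y i) d
        have h2 : y i % d < d := Nat.mod_lt (y i) hd0
        omega
      calc S + (k - 1) = ∑ i ∈ Finset.univ.erase j, (y i + 1) := by
            rw [Finset.sum_add_distrib, Finset.sum_const, hcard_erase]; simp [hS]
        _ ≤ ∑ i ∈ Finset.univ.erase j, (d * f i + d) :=
            Finset.sum_le_sum fun i _ => hlow i
        _ = d * F + (k - 1) * d := by
            rw [Finset.sum_add_distrib, Finset.sum_const, hcard_erase, hF, Finset.mul_sum]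
            simp [mul_comm]
    have hkY : r * h ≤ k * y j := by
      rw [← hysum]
      calc ∑ i, y i ≤ ∑ _i : Fin k, y j := Finset.sum_le_sum fun i _ => hj' i
        _ = k * y j := by rw [Finset.sum_const, Finset.card_univ, Fintype.card_fin, smul_eq_mul]
    -- key inequalities
    have hP2 : m' + 1 ≤ y j + d * F := by
      have h4 : S + (k - 1) ≤ d * F + h := hFlow.trans (Nat.add_le_add_left hd1 _)
      generalize hg1 : d * F = DF at h4 ⊢
      generalize hg2 : r * h = RH at hm'2 hYsum
      omega
    have hP1 : F + 1 ≤ r * (k - 1) := by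
      obtain ⟨K, hK⟩ := Nat.exists_eq_add_of_le hk2
      obtain ⟨R, hR⟩ := Nat.exists_eq_add_of_le hr
      have e1 : k - 1 = K + 1 := by omega
      have e2 : k = K + 2 := by omega
      have e3 : r = R + 2 := by omega
      have hYdF : y j + d * F ≤ r * h := by
        calc y j + d * F ≤ y j + S := Nat.add_le_add_left hdF _
          _ = r * h := hYsum
      have := arith_count K R h d (y j) F
        (by rw [e2] at hh; exact hh)
        (by rw [e1] at hd1; exact hd1)
        (by rw [e1] at hd2; exact hd2)
        (by rw [e2, e3] at hkY; exact hkY)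
        (by rw [e3] at hYdF; exact hYdF)
      rw [e1, e3]
      exact this
    have hF' : F ≤ r * (k - 1) - 1 := Nat.le_sub_one_of_lt hP1
    -- the parameter
    set w : Fin k → ℕ := fun i => if i = j then (r * (k - 1) - 1) - F else f i with hw
    have hwF : ∑ i' ∈ Finset.univ.erase j, w i' = F := by
      rw [hF]
      exact Finset.sum_congr rfl fun i hi => if_neg (Finset.ne_of_mem_erase hi)
    have hwj : w j = (r * (k - 1) - 1) - F := if_pos rfl
    have hwmem : w ∈ Finset.Nat.antidiagonalTuple k (r * (k - 1) - 1) := by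
      rw [Finset.Nat.mem_antidiagonalTuple, ← Finset.add_sum_erase _ _ (Finset.mem_univ j),
        hwF, hwj]
      exact Nat.sub_add_cancel hF'
    -- the remainder
    set z' : Fin k → ℕ := fun i => if i = j then (y j + d * F) - m' else y i - d * f i with hz'
    have hz'j : z' j = (y j + d * F) - m' := if_pos rfl
    have hz'sum : ∑ i, z' i = h := by
      rw [← Finset.add_sum_erase _ _ (Finset.mem_univ j), hz'j]
      have h2 : ∑ i ∈ Finset.univ.erase j, (z' i + d * f i) = S := by
        rw [hS]
        refine Finset.sum_congr rfl fun i hi => ?_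
        rw [show z' i = y i - d * f i from if_neg (Finset.ne_of_mem_erase hi)]
        exact Nat.sub_add_cancel (hdf i)
      have h3 : (∑ i ∈ Finset.univ.erase j, z' i) + d * F = S := by
        rw [hF, Finset.mul_sum, ← Finset.sum_add_distrib]
        exact h2
      generalize hg1 : d * F = DF at h3 hP2 ⊢
      generalize hg2 : r * h = RH at hm'2 hYsum
      omega
    -- decomposition
    have hcomp : ∀ i, (y i : ℤ) = U (j, w) i + (z' i : ℤ) := by
      intro i
      by_cases hij : i = j
      · subst hij
        rw [show U (i, w) i = (m' : ℤ) - d * ∑ i' ∈ Finset.univ.erase i, w i' from if_pos rfl,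
          hwF, hz'j, Nat.cast_sub (le_trans (Nat.le_succ m') hP2)]
        push_cast
        ring
      · rw [show U (j, w) i = (d * w i : ℤ) from if_neg hij,
          show z' i = y i - d * f i from if_neg hij,
          Nat.cast_sub (hdf i), show w i = f i from if_neg hij]
        push_cast
        ring
    have hsplit : ∑ i, y i • v i = Φ (j, w) + ∑ i, z' i • v i := by
      rw [show Φ (j, w) = ∑ i, U (j, w) i • v i from rfl, ← Finset.sum_add_distrib]
      refine Finset.sum_congr rfl fun i _ => ?_
      rw [show y i • v i = ((y i : ℤ)) • v i from (natCast_zsmul _ _).symm,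
        show z' i • v i = ((z' i : ℤ)) • v i from (natCast_zsmul _ _).symm,
        hcomp i, add_smul]
    rw [hsplit]
    refine Set.add_mem_add ?_ (sum_mem_hsum v h z' hz'sum)
    refine Finset.mem_coe.2 (Finset.mem_image.2 ⟨(j, w), ?_, rfl⟩)
    rw [hP]
    exact Finset.mem_product.2 ⟨Finset.mem_univ _, hwmem⟩
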